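/- Let m be an odd positive integer, H̃ ∈ Ω_{2n} an invertible Hermitian complex matrix, and B̃ ∈ Ω_{2n} an H̃-selfadjoint matrix whose spectrum consists only of negative real numbers. Then there exists an H̃-selfadjoint matrix Ã ∈ Ω_{2n} with Ã^m = B̃. -/

import Mathlib

open Matrix

noncomputable section

/-- The `k×k` upper-triangular Jordan block with eigenvalue `lam`. -/
def jordanBlock {R : Type*} [Zero R] [One R] (lam : R) (k : ℕ) : Matrix (Fin k) (Fin k) R :=
  Matrix.of fun i j => if (i : ℕ) = (j : ℕ) then lam else if (i : ℕ) + 1 = (j : ℕ) then 1 else 0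

/-- The `k×k` sip matrix: ones on the main anti-diagonal, zeros elsewhere. -/
def sip (R : Type*) [Zero R] [One R] (k : ℕ) : Matrix (Fin k) (Fin k) R :=
  Matrix.of fun i j => if (i : ℕ) + (j : ℕ) = k - 1 then 1 else 0

/-- The order-preserving identification of `Fin k ⊕ Fin k` with `Fin (2*k)`. -/
def finTwoMul (k : ℕ) : (Fin k ⊕ Fin k) ≃ Fin (2 * k) :=
  finSumFinEquiv.trans (finCongr (two_mul k).symm)

/-- Block-diagonal direct sum `M ⊕ N` of two `k×k` matrices, as a `(2k)×(2k)` matrix. -/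
def dsum2 {R : Type*} [Zero R] {k : ℕ} (M N : Matrix (Fin k) (Fin k) R) :
    Matrix (Fin (2 * k)) (Fin (2 * k)) R :=
  Matrix.reindex (finTwoMul k) (finTwoMul k) (Matrix.fromBlocks M 0 0 N)

/-- The `2n×2n` complex matrix `[[A₁, conj A₂], [−A₂, conj A₁]]`. -/
def omegaMap {n : ℕ} (A₁ A₂ : Matrix (Fin n) (Fin n) ℂ) :
    Matrix (Fin (2 * n)) (Fin (2 * n)) ℂ :=
  Matrix.reindex (finTwoMul n) (finTwoMul n)
    (Matrix.fromBlocks A₁ (A₂.map (starRingEnd ℂ)) (-A₂) (A₁.map (starRingEnd ℂ)))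

/-- Membership in the real subalgebra `Ω_{2n}` of `2n×2n` complex matrices. -/
def InOmega {n : ℕ} (M : Matrix (Fin (2 * n)) (Fin (2 * n)) ℂ) : Prop :=
  ∃ A₁ A₂ : Matrix (Fin n) (Fin n) ℂ, M = omegaMap A₁ A₂

/-! ### Auxiliary lemmas -/

open Polynomial

section Aux

lemma pow_add_expand {R : Type*} [CommRing R] (k : ℕ) (x d : R) :
    ∃ c : R, (x + d) ^ (k + 1) = x ^ (k + 1) + (k + 1 : ℕ) * x ^ k * d + d ^ 2 * c := by
  induction k with
  | zero => exact ⟨0, by push_cast; ring⟩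
  | succ k ih =>
    obtain ⟨c, hc⟩ := ih
    refine ⟨x * c + (k + 1 : ℕ) * x ^ k + d * c, ?_⟩
    rw [pow_succ (x + d), hc]
    push_cast; ring

/-- A Hensel/Newton style lemma: if `u₀ ^ m - b` is nilpotent and `m * u₀ ^ (m-1)` is a unit
in a commutative ring, then `b` has an `m`-th root. -/
lemma hensel_pow_root {S : Type*} [CommRing S] (m : ℕ) (hm : 0 < m) (b u₀ : S)
    (hnil : IsNilpotent (u₀ ^ m - b)) (hunit : IsUnit ((m : S) * u₀ ^ (m - 1))) :
    ∃ u : S, u ^ m = b := by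
  obtain ⟨mm, rfl⟩ : ∃ mm, m = mm + 1 := ⟨m - 1, (Nat.succ_pred_eq_of_pos hm).symm⟩
  simp only [Nat.add_sub_cancel] at hunit
  set g : S := u₀ ^ (mm + 1) - b with hg
  obtain ⟨w, hw⟩ := hunit
  set c : S := ↑w⁻¹ with hcdef
  have hc : c * ((mm + 1 : ℕ) * u₀ ^ mm) = 1 := by
    rw [hcdef, ← hw]; exact Units.inv_mul w
  have key : ∀ k : ℕ, ∃ u : S, (g ∣ u - u₀) ∧ (g ^ (k + 1) ∣ u ^ (mm + 1) - b) := by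
    intro k
    induction k with
    | zero => exact ⟨u₀, ⟨by simp, by rw [zero_add, pow_one]⟩⟩
    | succ k ih =>
      obtain ⟨u, hu1, hu2⟩ := ih
      set e : S := u ^ (mm + 1) - b with he
      refine ⟨u - c * e, ?_, ?_⟩
      · have hge : g ∣ e := dvd_trans (dvd_pow_self g (Nat.succ_ne_zero k)) hu2
        have : u - c * e - u₀ = (u - u₀) - c * e := by ring
        rw [this]
        exact dvd_sub hu1 (Dvd.dvd.mul_left hge c)
      · obtain ⟨r, hr⟩ := pow_add_expand mm u (-(c * e))
        have heq : (u - c * e) ^ (mm + 1) - b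
            = e * (1 - c * ((mm + 1 : ℕ) * u ^ mm)) + (c * e) ^ 2 * r := by
          have : u - c * e = u + -(c * e) := by ring
          rw [this, hr]; ring
        rw [heq]
        apply dvd_add
        · have h1 : g ∣ 1 - c * ((mm + 1 : ℕ) * u ^ mm) := by
            have : 1 - c * ((mm + 1 : ℕ) * u ^ mm)
                = c * (mm + 1 : ℕ) * (u₀ ^ mm - u ^ mm) := by
              rw [← hc]; ring
            rw [this]
            exact Dvd.dvd.mul_left
              ((dvd_neg.mpr hu1).trans (by simpa using sub_dvd_pow_sub_pow u₀ u mm)) _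
          calc g ^ (k + 1 + 1) = g ^ (k + 1) * g := by rw [pow_succ]
          _ ∣ e * (1 - c * ((mm + 1 : ℕ) * u ^ mm)) := mul_dvd_mul hu2 h1
        · have h2 : g ^ (k + 1 + 1) ∣ e ^ 2 := by
            calc g ^ (k + 1 + 1) ∣ g ^ ((k + 1) * 2) :=
              pow_dvd_pow g (by omega)
            _ = (g ^ (k + 1)) ^ 2 := by rw [pow_mul]
            _ ∣ e ^ 2 := pow_dvd_pow_of_dvd hu2 2
          have : (c * e) ^ 2 * r = e ^ 2 * (c ^ 2 * r) := by ring
          rw [this]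
          exact Dvd.dvd.mul_right h2 _
  obtain ⟨N, hN⟩ := hnil
  obtain ⟨u, _, hu⟩ := key N
  refine ⟨u, ?_⟩
  have : g ^ (N + 1) = 0 := by rw [pow_succ, hN, zero_mul]
  rw [this] at hu
  exact sub_eq_zero.mp (zero_dvd_iff.mp hu)

lemma isCoprime_X_sub_C_of_eval_ne {K : Type*} [Field K] (a : K) (p : K[X])
    (h : p.eval a ≠ 0) : IsCoprime (X - C a) p := by
  obtain ⟨k, hk⟩ := Polynomial.X_sub_C_dvd_sub_C_eval (a := a) (p := p)
  refine ⟨-(C (p.eval a)⁻¹) * k, C (p.eval a)⁻¹, ?_⟩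
  have h2 : (X - C a) * k = p - C (p.eval a) := hk.symm
  calc -(C (p.eval a)⁻¹) * k * (X - C a) + C (p.eval a)⁻¹ * p
      = C (p.eval a)⁻¹ * (p - (X - C a) * k) := by ring
    _ = C (p.eval a)⁻¹ * C (p.eval a) := by rw [h2]; ring_nf
    _ = 1 := by rw [← C_mul, inv_mul_cancel₀ h, C_1]

lemma multiset_prod_dvd_pow {K : Type*} [CommMonoid K] (s : Multiset K) (y : K)
    (h : ∀ x ∈ s, x ∣ y) : s.prod ∣ y ^ Multiset.card s := by
  induction s using Multiset.induction_on with
  | empty => simp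
  | cons a s ih =>
    rw [Multiset.prod_cons, Multiset.card_cons, pow_succ]
    exact mul_comm a s.prod ▸
      mul_dvd_mul (ih (fun x hx => h x (Multiset.mem_cons_of_mem hx)))
        (h a (Multiset.mem_cons_self a s))

lemma multiset_prod_isCoprime {K : Type*} [CommSemiring K] (s : Multiset K) (y : K)
    (h : ∀ x ∈ s, IsCoprime x y) : IsCoprime s.prod y := by
  induction s using Multiset.induction_on with
  | empty => simpa using isCoprime_one_left
  | cons a s ih =>
    rw [Multiset.prod_cons]
    exact IsCoprime.mul_left (h a (Multiset.mem_cons_self a s))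
      (ih (fun x hx => h x (Multiset.mem_cons_of_mem hx)))

lemma root_mem_spectrum {N : ℕ} (B : Matrix (Fin N) (Fin N) ℂ)
    {μ : ℂ} (hμ : μ ∈ B.charpoly.roots) : μ ∈ spectrum ℂ B := by
  have hroot : B.charpoly.IsRoot μ := (Polynomial.mem_roots'.mp hμ).2
  have hdet : (Matrix.scalar (Fin N) μ - B).det = 0 := by
    have h1 : B.charpoly.eval μ
        = (Polynomial.eval (Matrix.scalar (Fin N) μ) (matPolyEquiv (charmatrix B))).det := by
      rw [Matrix.charpoly, _root_.eval_det]
    rw [Matrix.matPolyEquiv_charmatrix] at h1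
    simp only [Polynomial.eval_sub, Polynomial.eval_X, Polynomial.eval_C] at h1
    rw [← h1]; exact hroot
  rw [spectrum.mem_iff]
  intro hU
  have halg : algebraMap ℂ (Matrix (Fin N) (Fin N) ℂ) μ = Matrix.scalar (Fin N) μ := by
    rfl
  rw [halg] at hU
  have := (Matrix.isUnit_iff_isUnit_det _).mp hU
  rw [hdet] at this
  exact not_isUnit_zero this

/-- Key construction: a real polynomial whose evaluation at `B` is an `m`-th root of `B`. -/
lemma exists_real_poly_root {N : ℕ} (m : ℕ) (hm : 0 < m) (hodd : Odd m)
    (B : Matrix (Fin N) (Fin N) ℂ)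
    (hspec : ∀ μ ∈ spectrum ℂ B, μ.im = 0 ∧ μ.re < 0) :
    ∃ q : ℝ[X], (Polynomial.aeval B q) ^ m = B := by
  classical
  set φ := algebraMap ℝ ℂ
  set cp := B.charpoly with hcp
  have hroots : ∀ μ ∈ cp.roots, μ.im = 0 ∧ μ.re < 0 :=
    fun μ hμ => hspec μ (root_mem_spectrum B hμ)
  have hre : ∀ μ ∈ cp.roots, ((μ.re : ℂ)) = μ := by
    intro μ hμ
    exact Complex.ext rfl (by simp [(hroots μ hμ).1])
  set pt : ℝ[X] := (cp.roots.map (fun μ : ℂ => X - C μ.re)).prod with hpt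
  have hptmonic : pt.Monic := by
    apply Polynomial.monic_multiset_prod_of_monic
    intro μ hμ
    exact Polynomial.monic_X_sub_C _
  have hsplit : cp = (cp.roots.map fun a => X - C a).prod :=
    Polynomial.Splits.eq_prod_roots_of_monic (IsAlgClosed.splits cp)
      (Matrix.charpoly_monic B)
  have hpmap : pt.map φ = cp := by
    rw [hpt, Polynomial.map_multiset_prod, Multiset.map_map]
    conv_rhs => rw [hsplit]
    congr 1
    apply Multiset.map_congr rfl
    intro μ hμ
    simp only [Function.comp_apply, Polynomial.map_sub, Polynomial.map_X, Polynomial.map_C]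
    rw [show φ μ.re = (μ.re : ℂ) from rfl, hre μ hμ]
  -- Lagrange interpolation of the real m-th root function on the eigenvalues
  set s : Finset ℝ := (cp.roots.map Complex.re).toFinset with hs
  set f : ℝ → ℝ := fun x => -((-x) ^ ((m : ℝ)⁻¹)) with hf
  set q₀ : ℝ[X] := Lagrange.interpolate s id f with hq₀
  have heval : ∀ μ ∈ cp.roots, q₀.eval μ.re = f μ.re := by
    intro μ hμ
    have hmem : μ.re ∈ s := by
      rw [hs, Multiset.mem_toFinset]
      exact Multiset.mem_map_of_mem _ hμ
    exact Lagrange.eval_interpolate_at_node f (Set.injOn_id _) hmem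
  have hfneg : ∀ x : ℝ, x < 0 → f x < 0 := by
    intro x hx
    rw [hf]
    simp only
    have := Real.rpow_pos_of_pos (show (0:ℝ) < -x by linarith) ((m : ℝ)⁻¹)
    linarith
  have hfpow : ∀ x : ℝ, x < 0 → (f x) ^ m = x := by
    intro x hx
    have hxpos : (0:ℝ) < -x := by linarith
    rw [hf]
    simp only
    rw [neg_pow]
    have h1 : ((-x) ^ ((m : ℝ)⁻¹)) ^ m = -x := by
      rw [← Real.rpow_natCast ((-x) ^ ((m : ℝ)⁻¹)) m, ← Real.rpow_mul hxpos.le,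
        inv_mul_cancel₀ (Nat.cast_ne_zero.mpr hm.ne'), Real.rpow_one]
    rw [h1, hodd.neg_one_pow]
    ring
  -- the polynomial g = q₀^m - X vanishes at every eigenvalue
  set g : ℝ[X] := q₀ ^ m - X with hg
  have hgroot : ∀ μ ∈ cp.roots, (g.map φ).IsRoot μ := by
    intro μ hμ
    obtain ⟨him, hlt⟩ := hroots μ hμ
    have hevalq : (q₀.map φ).eval μ = φ (q₀.eval μ.re) := by
      conv_lhs => rw [← hre μ hμ]
      rw [Polynomial.eval_map, show ((μ.re : ℂ)) = φ μ.re from rfl,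
        Polynomial.eval₂_at_apply]
    rw [Polynomial.IsRoot, hg, Polynomial.map_sub, Polynomial.map_pow, Polynomial.map_X,
      Polynomial.eval_sub, Polynomial.eval_pow, Polynomial.eval_X, hevalq,
      heval μ hμ, ← map_pow, hfpow μ.re hlt, show φ μ.re = ((μ.re:ℝ) : ℂ) from rfl,
      hre μ hμ, sub_self]
  -- pt divides g ^ number of roots
  have hdvd : pt ∣ g ^ Multiset.card cp.roots := by
    rw [← Polynomial.map_dvd_map' φ, Polynomial.map_pow, hpmap]
    conv_lhs => rw [hsplit]
    rw [show Multiset.card cp.roots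
      = Multiset.card (cp.roots.map (fun a : ℂ => X - C a)) from (Multiset.card_map _ _).symm]
    apply multiset_prod_dvd_pow
    intro x hx
    obtain ⟨μ, hμ, rfl⟩ := Multiset.mem_map.mp hx
    exact (Polynomial.dvd_iff_isRoot).mpr (hgroot μ hμ)
  -- coprimality of pt with m * q₀^(m-1)
  set h : ℝ[X] := (m : ℝ[X]) * q₀ ^ (m - 1) with hh
  have hcop : IsCoprime pt h := by
    rw [← Polynomial.isCoprime_map φ]
    rw [hpmap, hh, Polynomial.map_mul, Polynomial.map_pow, Polynomial.map_natCast]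
    conv_lhs => rw [hsplit]
    apply multiset_prod_isCoprime
    intro x hx
    obtain ⟨μ, hμ, rfl⟩ := Multiset.mem_map.mp hx
    apply isCoprime_X_sub_C_of_eval_ne
    obtain ⟨him, hlt⟩ := hroots μ hμ
    have hevalq : (q₀.map φ).eval μ = φ (q₀.eval μ.re) := by
      conv_lhs => rw [← hre μ hμ]
      rw [Polynomial.eval_map, show ((μ.re : ℂ)) = φ μ.re from rfl,
        Polynomial.eval₂_at_apply]
    rw [Polynomial.eval_mul, Polynomial.eval_pow, Polynomial.eval_natCast, hevalq, heval μ hμ]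
    apply mul_ne_zero (Nat.cast_ne_zero.mpr hm.ne')
    apply pow_ne_zero
    exact fun hc => (ne_of_lt (hfneg μ.re hlt)) (φ.injective (by rw [hc, map_zero]))
  -- pass to the quotient ring ℝ[X]/(pt) and apply the Hensel-type lemma
  set I : Ideal ℝ[X] := Ideal.span {pt} with hI
  set π : ℝ[X] →+* (ℝ[X] ⧸ I) := Ideal.Quotient.mk I with hπ
  have hnil : IsNilpotent ((π q₀) ^ m - π X) := by
    refine ⟨Multiset.card cp.roots, ?_⟩
    rw [← map_pow, ← map_sub, ← map_pow, Ideal.Quotient.eq_zero_iff_mem, hI,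
      Ideal.mem_span_singleton]
    exact hdvd
  have hunit : IsUnit ((m : ℝ[X] ⧸ I) * (π q₀) ^ (m - 1)) := by
    obtain ⟨a, b, hab⟩ := hcop
    apply IsUnit.of_mul_eq_one (π b)
    have h0 : π pt = 0 := by
      rw [hπ, Ideal.Quotient.eq_zero_iff_mem, hI]
      exact Ideal.mem_span_singleton_self pt
    have := congrArg π hab
    rw [map_add, _root_.map_mul, _root_.map_mul, h0, mul_zero, _root_.map_one] at this
    calc (m : ℝ[X] ⧸ I) * (π q₀) ^ (m - 1) * π b
        = π b * π ((m : ℝ[X]) * q₀ ^ (m - 1)) := by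
          rw [_root_.map_mul, map_pow, map_natCast]; ring
      _ = 1 := by rw [← hh]; rw [zero_add] at this; exact this
  obtain ⟨u, hu⟩ := hensel_pow_root m hm (π X) (π q₀) hnil hunit
  obtain ⟨q, rfl⟩ := Ideal.Quotient.mk_surjective u
  have hmem : q ^ m - X ∈ I := by
    rw [← Ideal.Quotient.eq_zero_iff_mem]
    show π (q ^ m - X) = 0
    rw [map_sub, map_pow, hu, sub_self]
  rw [hI, Ideal.mem_span_singleton] at hmem
  obtain ⟨r, hr⟩ := hmem
  refine ⟨q, ?_⟩
  have haevalpt : (Polynomial.aeval B) pt = 0 := by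
    have := Polynomial.aeval_map_algebraMap ℂ B pt
    rw [hpmap] at this
    rw [← this, hcp]
    exact Matrix.aeval_self_charpoly B
  have : (Polynomial.aeval B) (q ^ m - X) = 0 := by
    rw [hr, _root_.map_mul, haevalpt, zero_mul]
  rw [map_sub, map_pow, Polynomial.aeval_X, sub_eq_zero] at this
  exact this

lemma selfadj_aeval {N : ℕ} (H B : Matrix (Fin N) (Fin N) ℂ)
    (hBsa : H * B = Bᴴ * H) (q : ℝ[X]) :
    H * (Polynomial.aeval B q) = (Polynomial.aeval B q)ᴴ * H := by
  have hpow : ∀ i : ℕ, H * B ^ i = (Bᴴ) ^ i * H := by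
    intro i
    induction i with
    | zero => simp
    | succ i ih =>
      rw [pow_succ, ← mul_assoc, ih, mul_assoc, hBsa, ← mul_assoc, ← pow_succ]
  set qc : ℂ[X] := q.map (algebraMap ℝ ℂ) with hqc
  have hA : Polynomial.aeval B q = Polynomial.aeval B qc :=
    (Polynomial.aeval_map_algebraMap ℂ B q).symm
  have hstar : ∀ i : ℕ, star (qc.coeff i) = qc.coeff i := by
    intro i
    rw [hqc, Polynomial.coeff_map]
    exact Complex.conj_ofReal _
  rw [hA, Polynomial.aeval_eq_sum_range (p := qc) B]
  rw [Matrix.conjTranspose_sum]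
  rw [Finset.mul_sum, Finset.sum_mul]
  apply Finset.sum_congr rfl
  intro i _
  rw [Matrix.conjTranspose_smul, hstar, Matrix.conjTranspose_pow,
    mul_smul_comm, smul_mul_assoc, hpow]

/-! ### `Ω_{2n}` is a real subalgebra -/

lemma mapConj_add {k l : ℕ} (A B : Matrix (Fin k) (Fin l) ℂ) :
    (A + B).map (starRingEnd ℂ) = A.map (starRingEnd ℂ) + B.map (starRingEnd ℂ) :=
  Matrix.map_add _ (fun _ _ => by simp) _ _

lemma mapConj_mul {k : ℕ} (A B : Matrix (Fin k) (Fin k) ℂ) :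
    (A * B).map (starRingEnd ℂ) = A.map (starRingEnd ℂ) * B.map (starRingEnd ℂ) :=
  Matrix.map_mul

lemma mapConj_conj {k l : ℕ} (A : Matrix (Fin k) (Fin l) ℂ) :
    (A.map (starRingEnd ℂ)).map (starRingEnd ℂ) = A := by
  rw [Matrix.map_map]
  convert Matrix.map_id A
  ext z; simp

lemma omegaMap_add {n : ℕ} (A₁ A₂ B₁ B₂ : Matrix (Fin n) (Fin n) ℂ) :
    omegaMap A₁ A₂ + omegaMap B₁ B₂ = omegaMap (A₁ + B₁) (A₂ + B₂) := by
  simp only [omegaMap, Matrix.reindex_apply, mapConj_add, neg_add]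
  rw [← Matrix.fromBlocks_add]
  rfl

lemma omegaMap_mul {n : ℕ} (A₁ A₂ B₁ B₂ : Matrix (Fin n) (Fin n) ℂ) :
    omegaMap A₁ A₂ * omegaMap B₁ B₂
      = omegaMap (A₁ * B₁ - A₂.map (starRingEnd ℂ) * B₂)
        (A₂ * B₁ + A₁.map (starRingEnd ℂ) * B₂) := by
  simp only [omegaMap, Matrix.reindex_apply, Matrix.submatrix_mul_equiv,
    Matrix.fromBlocks_multiply]
  have h11 : A₁ * B₁ + A₂.map (starRingEnd ℂ) * (-B₂)
      = A₁ * B₁ - A₂.map (starRingEnd ℂ) * B₂ := by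
    rw [Matrix.mul_neg, ← sub_eq_add_neg]
  have h12 : A₁ * B₂.map (starRingEnd ℂ) + A₂.map (starRingEnd ℂ) * B₁.map (starRingEnd ℂ)
      = (A₂ * B₁ + A₁.map (starRingEnd ℂ) * B₂).map (starRingEnd ℂ) := by
    rw [mapConj_add, mapConj_mul, mapConj_mul, mapConj_conj, add_comm]
  have h21 : -A₂ * B₁ + A₁.map (starRingEnd ℂ) * (-B₂)
      = -(A₂ * B₁ + A₁.map (starRingEnd ℂ) * B₂) := by
    rw [Matrix.mul_neg, Matrix.neg_mul, neg_add]
  have hneg : ∀ (M : Matrix (Fin n) (Fin n) ℂ),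
      (-M).map (starRingEnd ℂ) = -(M.map (starRingEnd ℂ)) := by
    intro M; ext i j; simp [Matrix.map_apply]
  have h22 : -A₂ * B₂.map (starRingEnd ℂ) + A₁.map (starRingEnd ℂ) * B₁.map (starRingEnd ℂ)
      = (A₁ * B₁ - A₂.map (starRingEnd ℂ) * B₂).map (starRingEnd ℂ) := by
    have hsub : (A₁ * B₁ - A₂.map (starRingEnd ℂ) * B₂)
        = A₁ * B₁ + -(A₂.map (starRingEnd ℂ) * B₂) := by
      rw [← sub_eq_add_neg]
    rw [hsub, mapConj_add, mapConj_mul, hneg, mapConj_mul, mapConj_conj, Matrix.neg_mul]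
    abel
  rw [h11, h12, h21, h22]

lemma inOmega_one {n : ℕ} : InOmega (1 : Matrix (Fin (2 * n)) (Fin (2 * n)) ℂ) := by
  refine ⟨1, 0, ?_⟩
  have : ((0 : Matrix (Fin n) (Fin n) ℂ)).map (starRingEnd ℂ) = 0 := by ext i j; simp
  have h1 : ((1 : Matrix (Fin n) (Fin n) ℂ)).map (starRingEnd ℂ) = 1 := by
    ext i j; by_cases h : i = j <;> simp [Matrix.one_apply, h]
  simp [omegaMap, this, h1, Matrix.fromBlocks_one]

lemma inOmega_algebraMap {n : ℕ} (r : ℝ) :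
    InOmega (algebraMap ℝ (Matrix (Fin (2 * n)) (Fin (2 * n)) ℂ) r) := by
  refine ⟨algebraMap ℝ _ r, 0, ?_⟩
  have h0 : ((0 : Matrix (Fin n) (Fin n) ℂ)).map (starRingEnd ℂ) = 0 := by ext i j; simp
  have e1 : algebraMap ℝ (Matrix (Fin n) (Fin n) ℂ) r = r • 1 :=
    Algebra.algebraMap_eq_smul_one r
  have h1 : ((r • (1 : Matrix (Fin n) (Fin n) ℂ))).map (starRingEnd ℂ) = r • 1 := by
    ext i j
    by_cases h : i = j <;>
      simp [Matrix.map_apply, Matrix.one_apply, h, Complex.real_smul]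
  rw [omegaMap, h0, e1, h1, neg_zero]
  have hb : Matrix.fromBlocks (r • (1 : Matrix (Fin n) (Fin n) ℂ)) 0 0 (r • 1)
      = r • (1 : Matrix (Fin n ⊕ Fin n) (Fin n ⊕ Fin n) ℂ) := by
    rw [← Matrix.fromBlocks_one, Matrix.fromBlocks_smul, smul_zero]
  rw [hb, Matrix.reindex_apply]
  have hs : ((r • (1 : Matrix (Fin n ⊕ Fin n) (Fin n ⊕ Fin n) ℂ)).submatrix
        ((finTwoMul n).symm) ((finTwoMul n).symm))
      = r • ((1 : Matrix (Fin n ⊕ Fin n) (Fin n ⊕ Fin n) ℂ).submatrix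
        ((finTwoMul n).symm) ((finTwoMul n).symm)) := by
    ext i j
    have hone : (1 : Matrix (Fin n ⊕ Fin n) (Fin n ⊕ Fin n) ℂ) ((finTwoMul n).symm i)
        ((finTwoMul n).symm j) = (1 : Matrix (Fin (2 * n)) (Fin (2 * n)) ℂ) i j := by
      by_cases h : i = j
      · subst h; simp [Matrix.one_apply]
      · rw [Matrix.one_apply_ne (fun c => h ((finTwoMul n).symm.injective c)),
          Matrix.one_apply_ne h]
    simp [Matrix.submatrix_apply, hone]
  rw [hs, Matrix.submatrix_one_equiv, Algebra.algebraMap_eq_smul_one]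

/-- `Ω_{2n}` as a real subalgebra of the `2n×2n` complex matrices. -/
def omegaSubalgebra (n : ℕ) : Subalgebra ℝ (Matrix (Fin (2 * n)) (Fin (2 * n)) ℂ) where
  carrier := {M | InOmega M}
  mul_mem' := by
    rintro x y ⟨a₁, a₂, rfl⟩ ⟨b₁, b₂, rfl⟩
    exact ⟨_, _, omegaMap_mul a₁ a₂ b₁ b₂⟩
  add_mem' := by
    rintro x y ⟨a₁, a₂, rfl⟩ ⟨b₁, b₂, rfl⟩
    exact ⟨_, _, omegaMap_add a₁ a₂ b₁ b₂⟩
  algebraMap_mem' := inOmega_algebraMap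

end Aux

/-- **Theorem 3.7.** For `m` odd, an `H̃`-selfadjoint matrix in `Ω_{2n}` whose spectrum
consists only of negative real numbers has an `H̃`-selfadjoint `m`th root in `Ω_{2n}`. -/
theorem exists_root_negative_spectrum_odd {n : ℕ} (m : ℕ) (hm : 0 < m) (hodd : Odd m)
    (H B : Matrix (Fin (2 * n)) (Fin (2 * n)) ℂ)
    (hHΩ : InOmega H) (hHu : IsUnit H) (hHherm : H.IsHermitian)
    (hBΩ : InOmega B) (hBsa : H * B = Bᴴ * H)
    (hspec : ∀ μ ∈ spectrum ℂ B, μ.im = 0 ∧ μ.re < 0) :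
    ∃ A : Matrix (Fin (2 * n)) (Fin (2 * n)) ℂ,
      InOmega A ∧ H * A = Aᴴ * H ∧ A ^ m = B := by
  obtain ⟨q, hq⟩ := exists_real_poly_root m hm hodd B hspec
  refine ⟨Polynomial.aeval B q, ?_, selfadj_aeval H B hBsa q, hq⟩
  have hmem : Polynomial.aeval B q ∈ Algebra.adjoin ℝ {B} :=
    Polynomial.aeval_mem_adjoin_singleton ℝ B
  have hle : Algebra.adjoin ℝ {B} ≤ omegaSubalgebra n := by
    apply Algebra.adjoin_le
    intro x hx
    rw [Set.mem_singleton_iff] at hx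
    subst hx
    exact hBΩ
  exact hle hmem

end
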